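/- Let n ≥ 2 and 0 < r < R, and suppose Ω ∈ S_{r,R}. If there exists ρ > 0 such that the closed ball B̄_ρ(0) is contained in Ω and ρ² ≥ 5(R² − r²), then Ω satisfies ρ-reflection. -/
import Mathlib


open MeasureTheory Metric Set
open scoped ENNReal RealInnerProductSpace

noncomputable section

/-- `Ω` is a bounded open set, star-shaped with respect to the ball `B_r(0)`. -/
def StarShaped (n : ℕ) (r : ℝ) (Ω : Set (EuclideanSpace ℝ (Fin n))) : Prop :=
  IsOpen Ω ∧ Bornology.IsBounded Ω ∧
    ∀ y ∈ ball (0 : EuclideanSpace ℝ (Fin n)) r, ∀ x ∈ Ω, segment ℝ y x ⊆ Ω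

/-- `Ω ∈ S_{r,R}`: star-shaped with respect to `B_r(0)` and contained in `B_R(0)`. -/
def SrR (n : ℕ) (r R : ℝ) (Ω : Set (EuclideanSpace ℝ (Fin n))) : Prop :=
  StarShaped n r Ω ∧ Ω ⊆ ball 0 R

/-- `Ω` satisfies `ρ`-reflection: it contains `B̄_ρ(0)` and for every unit direction `ν`
and every `s > ρ`, the reflection across the hyperplane `{x·ν = s}` maps
`Ω ∩ {x·ν > s}` into `Ω ∩ {x·ν < s}`. -/
def RhoReflection (n : ℕ) (ρ : ℝ) (Ω : Set (EuclideanSpace ℝ (Fin n))) : Prop :=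
  closedBall (0 : EuclideanSpace ℝ (Fin n)) ρ ⊆ Ω ∧
    ∀ ν : EuclideanSpace ℝ (Fin n), ‖ν‖ = 1 → ∀ s : ℝ, ρ < s →
      (fun x => x - (2 * ⟪x - s • ν, ν⟫) • ν) '' (Ω ∩ {x | s < ⟪x, ν⟫}) ⊆
        Ω ∩ {x | ⟪x, ν⟫ < s}

/-- If `Ω ∈ S_{r,R}` contains `B̄_ρ(0)` with `ρ² ≥ 5(R² - r²)`, then `Ω` satisfies
`ρ`-reflection. -/
theorem statement13 (n : ℕ) (hn : 2 ≤ n) (r R : ℝ) (hr : 0 < r) (hrR : r < R)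
    (Ω : Set (EuclideanSpace ℝ (Fin n))) (hΩ : SrR n r R Ω)
    (ρ : ℝ) (hρ : 0 < ρ) (hball : closedBall (0 : EuclideanSpace ℝ (Fin n)) ρ ⊆ Ω)
    (hρ2 : 5 * (R ^ 2 - r ^ 2) ≤ ρ ^ 2) :
    RhoReflection n ρ Ω := by
  obtain ⟨⟨hopen, hbdd, hstar⟩, hΩR⟩ := hΩ
  have h0Ω : (0 : EuclideanSpace ℝ (Fin n)) ∈ Ω := hball (by simp [hρ.le])
  have hballr : ball (0 : EuclideanSpace ℝ (Fin n)) r ⊆ Ω := fun y hy =>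
    hstar y hy 0 h0Ω (left_mem_segment ℝ y 0)
  refine ⟨hball, ?_⟩
  intro ν hν s hs
  rintro z ⟨x, ⟨hxΩ, hxs⟩, rfl⟩
  have hνν : ⟪ν, ν⟫ = 1 := by
    rw [real_inner_self_eq_norm_sq, hν]; norm_num
  set t : ℝ := ⟪x, ν⟫ with ht
  have hts : s < t := hxs
  have hinner : ⟪x - s • ν, ν⟫ = t - s := by
    rw [inner_sub_left, real_inner_smul_left, hνν]; ring
  have hRr : 0 < R ^ 2 - r ^ 2 := by nlinarith
  have hxR : ‖x‖ < R := mem_ball_zero_iff.mp (hΩR hxΩ)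
  have hxR2 : ‖x‖ ^ 2 < R ^ 2 := by nlinarith [norm_nonneg x]
  have hρt : ρ < t := hs.trans hts
  have ht0 : 0 < t := hρ.trans hρt
  have hs0 : 0 < s := hρ.trans hs
  simp only [hinner, mem_inter_iff, mem_setOf_eq]
  constructor
  · -- the reflected point lies in Ω
    by_cases hcase : t ≤ 2 * s
    · -- reflected point is on segment from y = x - t•ν (in B_r) to x
      set y : EuclideanSpace ℝ (Fin n) := x - t • ν with hy
      have hy2 : ‖y‖ ^ 2 = ‖x‖ ^ 2 - t ^ 2 := by
        rw [hy, norm_sub_sq_real, real_inner_smul_right, norm_smul, ← ht, hν, mul_one,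
          Real.norm_eq_abs, sq_abs]
        ring
      have hyr : ‖y‖ < r := by
        have hρt2 : ρ * ρ < t * t := mul_self_lt_mul_self hρ.le hρt
        have h1 : ‖y‖ ^ 2 < r ^ 2 := by nlinarith [hxR2, hρ2, hRr]
        exact lt_of_pow_lt_pow_left₀ 2 hr.le h1
      refine hstar y (mem_ball_zero_iff.mpr hyr) x hxΩ ?_
      refine ⟨2 * (t - s) / t, (2 * s - t) / t,
        div_nonneg (by linarith) ht0.le,
        div_nonneg (by linarith) ht0.le, by field_simp; ring, ?_⟩
      have hat : 2 * (t - s) / t * t = 2 * (t - s) := by field_simp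
      have hab : 2 * (t - s) / t + (2 * s - t) / t = 1 := by field_simp; ring
      calc (2 * (t - s) / t) • y + ((2 * s - t) / t) • x
          = (2 * (t - s) / t + (2 * s - t) / t) • x - (2 * (t - s) / t * t) • ν := by
            rw [hy, smul_sub, add_smul, smul_smul]; abel
        _ = x - (2 * (t - s)) • ν := by rw [hab, one_smul, hat]
    · -- reflected point itself is in B_r
      push_neg at hcase
      apply hballr
      rw [mem_ball_zero_iff]
      have h2 : ‖x - (2 * (t - s)) • ν‖ ^ 2
          = ‖x‖ ^ 2 - 2 * (2 * (t - s)) * t + (2 * (t - s)) ^ 2 := by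
        rw [norm_sub_sq_real, real_inner_smul_right, norm_smul, ← ht, hν, mul_one,
          Real.norm_eq_abs, sq_abs]
        ring
      have hρs2 : ρ * ρ < s * s := mul_self_lt_mul_self hρ.le hs
      have hst2 : s * s < s * (t - s) :=
        mul_lt_mul_of_pos_left (show s < t - s by linarith) hs0
      have h1 : ‖x - (2 * (t - s)) • ν‖ ^ 2 < r ^ 2 := by
        rw [h2]
        nlinarith [hxR2, hρ2, hRr]
      exact lt_of_pow_lt_pow_left₀ 2 hr.le h1
  · -- the inner product condition
    rw [inner_sub_left, real_inner_smul_left, hνν, ← ht]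
    linarith
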